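/- Let E be an elementary topos (a category with all finite limits, which is cartesian closed, and which has a subobject classifier Ω with truth arrow true : 1 → Ω). Let (G, δ, ε) be a comonad on E whose underlying endofunctor G preserves finite limits (is left exact). Then the category of coalgebras for the comonad (G, δ, ε) is itself an elementary topos: it has all finite limits, is cartesian closed, and has a subobject classifier. -/

import Mathlib

open CategoryTheory CategoryTheory.Limits

universe v u

/-- A category has a subobject classifier: an object `Ω` with a truth arrow
`t : ⊤ ⟶ Ω` such that every monomorphism is the pullback of `t` along a
unique characteristic morphism. -/
def HasSubobjectClassifier (C : Type u) [Category.{v} C] [HasTerminal C] : Prop :=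
  ∃ (Om : C) (t : ⊤_ C ⟶ Om), ∀ {S X : C} (m : S ⟶ X), Mono m →
    ∃! φ : X ⟶ Om, IsPullback (terminal.from S) m t φ

/-- An elementary topos: all finite limits, cartesian closed, and a
subobject classifier. -/
structure IsElementaryTopos (C : Type u) [Category.{v} C] : Prop where
  hasFiniteLimits : HasFiniteLimits C
  cartesianClosed :
    letI := hasFiniteLimits
    letI := CategoryTheory.CartesianMonoidalCategory.ofHasFiniteProducts (C := C)
    Nonempty (MonoidalClosed C)
  subobjectClassifier :
    letI := hasFiniteLimits
    _root_.HasSubobjectClassifier C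

open CategoryTheory.MonoidalCategory CategoryTheory.Comonad
open CategoryTheory.CartesianMonoidalCategory CategoryTheory.CartesianClosed CategoryTheory.MonoidalClosed

set_option linter.unusedSectionVars false

section LimitsPart

namespace CoalgebraToposAux

variable {E : Type u} [Category.{v} E] [HasFiniteLimits E]
variable (G : Comonad E) [PreservesFiniteLimits (G : E ⥤ E)]

lemma hasFiniteLimits_coalgebra : HasFiniteLimits (Comonad.Coalgebra G) := by
  constructor
  intro J _ _
  exact hasLimitsOfShape_of_hasLimitsOfShape_createsLimitsOfShape (Comonad.forget G)

lemma preservesFiniteLimits_forget :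
    letI := hasFiniteLimits_coalgebra G
    PreservesFiniteLimits (Comonad.forget G) := by
  letI := hasFiniteLimits_coalgebra G
  constructor
  intro J _ _
  infer_instance

end CoalgebraToposAux

end LimitsPart

namespace CoalgebraToposAux

section Exp

variable {E : Type u} [Category.{v} E] [CartesianMonoidalCategory E] [MonoidalClosed E]
variable {G : Comonad E}

/-- The adjunct `C' ⟶ cofree Z` of a map `C'.A ⟶ Z`. -/
def toCofree {C' : Comonad.Coalgebra G} {Z : E} (f : C'.A ⟶ Z) : C' ⟶ G.cofree.obj Z where
  f := C'.a ≫ (G : E ⥤ E).map f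
  h := by
    show C'.a ≫ (G : E ⥤ E).map (C'.a ≫ (G : E ⥤ E).map f) = (C'.a ≫ (G : E ⥤ E).map f) ≫ G.δ.app Z
    simp only [Functor.map_comp, ← Category.assoc]
    rw [← Comonad.Coalgebra.coassoc]
    simp [Category.assoc]

@[simp] lemma toCofree_f {C' : Comonad.Coalgebra G} {Z : E} (f : C'.A ⟶ Z) :
    (toCofree f).f = C'.a ≫ (G : E ⥤ E).map f := rfl

@[simp] lemma toCofree_eps {C' : Comonad.Coalgebra G} {Z : E} (f : C'.A ⟶ Z) :
    (toCofree f).f ≫ G.ε.app Z = f := by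
  dsimp
  erw [Category.assoc, G.ε.naturality f]
  simp [← Category.assoc, C'.counit]

lemma toCofree_eps_self {C' : Comonad.Coalgebra G} {Z : E} (φ : C' ⟶ G.cofree.obj Z) :
    toCofree (φ.f ≫ G.ε.app Z) = φ := by
  ext
  dsimp
  erw [Functor.map_comp, ← Category.assoc, φ.h]
  erw [Comonad.cofree_obj_a]
  erw [Category.assoc, Comonad.right_counit, Category.comp_id]

lemma cofreeHom_ext {C' : Comonad.Coalgebra G} {Z : E} {φ ψ : C' ⟶ G.cofree.obj Z}
    (h : φ.f ≫ G.ε.app Z = ψ.f ≫ G.ε.app Z) : φ = ψ := by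
  rw [← toCofree_eps_self φ, ← toCofree_eps_self ψ, h]

lemma toCofree_natural_left {C'' C' : Comonad.Coalgebra G} (g : C'' ⟶ C') {Z : E}
    (f : C'.A ⟶ Z) : g ≫ toCofree f = toCofree (g.f ≫ f) := by
  ext
  dsimp
  erw [← Category.assoc, ← g.h]
  simp [Category.assoc]
  exact Category.assoc _ _ _

variable [HasFiniteLimits (Comonad.Coalgebra G)]
variable [CartesianMonoidalCategory (Comonad.Coalgebra G)]
variable [PreservesFiniteLimits (Comonad.forget G)]

/-- The natural bijection `(A ⊗ C' ⟶ cofree Z) ≃ (C' ⟶ cofree (A.A ⟹ Z))`. -/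
noncomputable def Θ (A C' : Comonad.Coalgebra G) (Z : E) :
    ((A ⊗ C') ⟶ G.cofree.obj Z) ≃ (C' ⟶ G.cofree.obj (A.A ⟹ Z)) where
  toFun ψ := toCofree (curry ((inv (CartesianMonoidalCategory.prodComparison G.forget A C') : G.forget.obj A ⊗ G.forget.obj C' ⟶ G.forget.obj (A ⊗ C')) ≫ ψ.f ≫ G.ε.app Z))
  invFun φ := toCofree (CartesianMonoidalCategory.prodComparison G.forget A C' ≫ uncurry (φ.f ≫ G.ε.app ((ihom A.A).obj Z)))
  left_inv ψ := by
    dsimp only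
    erw [toCofree_eps, uncurry_curry, IsIso.hom_inv_id_assoc, toCofree_eps_self]
  right_inv φ := by
    dsimp only
    erw [toCofree_eps, IsIso.inv_hom_id_assoc, curry_uncurry, toCofree_eps_self]

end Exp

end CoalgebraToposAux

namespace CoalgebraToposAux2
section Exp2
variable {E : Type u} [Category.{v} E] [CartesianMonoidalCategory E] [MonoidalClosed E]
variable {G : Comonad E}
variable [HasFiniteLimits (Comonad.Coalgebra G)]
variable [CartesianMonoidalCategory (Comonad.Coalgebra G)]
variable [PreservesFiniteLimits (Comonad.forget G)]

open CoalgebraToposAux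

lemma Θ_natural {A C' C'' : Comonad.Coalgebra G} (g : C'' ⟶ C') {Z : E}
    (ψ : (A ⊗ C') ⟶ G.cofree.obj Z) :
    Θ A C'' Z ((A ◁ g) ≫ ψ) = g ≫ Θ A C' Z ψ := by
  dsimp only [Θ, Equiv.coe_fn_mk]
  rw [toCofree_natural_left, ← curry_natural_left]
  congr 2
  rw [show ((A ◁ g) ≫ ψ).f = G.forget.map (A ◁ g) ≫ ψ.f from rfl]
  erw [Category.assoc, CartesianMonoidalCategory.prodComparison_inv_natural_whiskerLeft_assoc]
  rfl

/-- Transfer of a morphism between cofree coalgebras along `Θ`. -/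
noncomputable def transfer (A : Comonad.Coalgebra G) {Z Z' : E}
    (w : G.cofree.obj Z ⟶ G.cofree.obj Z') :
    G.cofree.obj (A.A ⟹ Z) ⟶ G.cofree.obj (A.A ⟹ Z') :=
  Θ A (G.cofree.obj (A.A ⟹ Z)) Z' ((Θ A (G.cofree.obj (A.A ⟹ Z)) Z).symm (𝟙 _) ≫ w)

lemma Θ_transfer (A : Comonad.Coalgebra G) {C' : Comonad.Coalgebra G} {Z Z' : E}
    (ψ : (A ⊗ C') ⟶ G.cofree.obj Z) (w : G.cofree.obj Z ⟶ G.cofree.obj Z') :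
    Θ A C' Z' (ψ ≫ w) = Θ A C' Z ψ ≫ transfer A w := by
  have hψ : ψ = (A ◁ Θ A C' Z ψ) ≫ (Θ A (G.cofree.obj (A.A ⟹ Z)) Z).symm (𝟙 _) := by
    apply (Θ A C' Z).injective
    rw [Θ_natural, Equiv.apply_symm_apply, Category.comp_id]
  conv_lhs => rw [hψ, Category.assoc]
  rw [Θ_natural]
  rfl

/-- The coalgebra morphism `cofree B.A ⟶ cofree (G B.A)` given by comultiplication. -/
def deltaHom (B : Comonad.Coalgebra G) :
    G.cofree.obj B.A ⟶ G.cofree.obj ((G : E ⥤ E).obj B.A) where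
  f := G.δ.app B.A
  h := by exact G.coassoc B.A

/-- The unit `B ⟶ cofree B.A`. -/
def unitHom (B : Comonad.Coalgebra G) : B ⟶ G.cofree.obj B.A := toCofree (𝟙 B.A)

lemma comp_unitHom_f {D B : Comonad.Coalgebra G} (k : D ⟶ B) :
    (k ≫ unitHom B).f = k.f ≫ B.a := by
  dsimp [unitHom]; simp; rfl

lemma unit_w (B : Comonad.Coalgebra G) :
    unitHom B ≫ G.cofree.map B.a = unitHom B ≫ deltaHom B := by
  ext
  simp [unitHom, deltaHom, B.coassoc]
  exact B.coassoc.symm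

/-- Given `ψ : D ⟶ cofree B.A` equalizing the two canonical maps, the induced
coalgebra morphism `D ⟶ B`. -/
def fromCofreeHom {D B : Comonad.Coalgebra G} (ψ : D ⟶ G.cofree.obj B.A)
    (hf : ψ.f ≫ (G : E ⥤ E).map B.a = ψ.f ≫ G.δ.app B.A) : D ⟶ B where
  f := ψ.f ≫ G.ε.app B.A
  h := by
    have h1 : D.a ≫ (G : E ⥤ E).map (ψ.f ≫ G.ε.app B.A) = ψ.f :=
      congrArg Comonad.Coalgebra.Hom.f (toCofree_eps_self ψ)
    have hnat : (G : E ⥤ E).map B.a ≫ G.ε.app ((G : E ⥤ E).obj B.A) = G.ε.app B.A ≫ B.a := by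
      have := G.ε.naturality B.a
      dsimp at this
      exact this
    have h2 : (ψ.f ≫ G.ε.app B.A) ≫ B.a = ψ.f := by
      erw [Category.assoc, ← hnat, ← Category.assoc, hf, Category.assoc, Comonad.left_counit]
      exact Category.comp_id _
    rw [h1, h2]

lemma fromCofreeHom_comp_a {D B : Comonad.Coalgebra G} (ψ : D ⟶ G.cofree.obj B.A)
    (hf : ψ.f ≫ (G : E ⥤ E).map B.a = ψ.f ≫ G.δ.app B.A) :
    (ψ.f ≫ G.ε.app B.A) ≫ B.a = ψ.f := by
  have hnat : (G : E ⥤ E).map B.a ≫ G.ε.app ((G : E ⥤ E).obj B.A) = G.ε.app B.A ≫ B.a := by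
    have := G.ε.naturality B.a
    dsimp at this
    exact this
  erw [Category.assoc, ← hnat, ← Category.assoc, hf, Category.assoc, Comonad.left_counit]
  exact Category.comp_id _

lemma expEquiv_aux₁ (A : Comonad.Coalgebra G) {B C' : Comonad.Coalgebra G}
    (k : (tensorLeft A).obj C' ⟶ B) :
    Θ A C' B.A (k ≫ unitHom B) ≫ transfer A (G.cofree.map B.a)
      = Θ A C' B.A (k ≫ unitHom B) ≫ transfer A (deltaHom B) :=
  calc Θ A C' B.A (k ≫ unitHom B) ≫ transfer A (G.cofree.map B.a)
      = Θ A C' _ ((k ≫ unitHom B) ≫ G.cofree.map B.a) :=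
        (Θ_transfer A (k ≫ unitHom B) (G.cofree.map B.a)).symm
    _ = Θ A C' _ ((k ≫ unitHom B) ≫ deltaHom B) := by
        rw [Category.assoc, Category.assoc, unit_w]
    _ = Θ A C' B.A (k ≫ unitHom B) ≫ transfer A (deltaHom B) :=
        Θ_transfer A (k ≫ unitHom B) (deltaHom B)

/-- The exponential object in coalgebras. -/
noncomputable def Rexp (A B : Comonad.Coalgebra G) : Comonad.Coalgebra G :=
  equalizer (transfer A (G.cofree.map B.a)) (transfer A (deltaHom B))

lemma expEquiv_aux₂ (A : Comonad.Coalgebra G) {B C' : Comonad.Coalgebra G}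
    (φ : C' ⟶ Rexp A B) :
    ((Θ A C' B.A).symm (φ ≫ equalizer.ι _ _)).f ≫ (G : E ⥤ E).map B.a
      = ((Θ A C' B.A).symm (φ ≫ equalizer.ι _ _)).f ≫ G.δ.app B.A := by
  have hcond : (Θ A C' B.A).symm (φ ≫ equalizer.ι _ _) ≫ G.cofree.map B.a
      = (Θ A C' B.A).symm (φ ≫ equalizer.ι _ _) ≫ deltaHom B := by
    apply (Θ A C' ((G : E ⥤ E).obj B.A)).injective
    erw [Θ_transfer, Θ_transfer, Equiv.apply_symm_apply, Category.assoc, Category.assoc,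
      equalizer.condition]
    rfl
  have := congrArg Comonad.Coalgebra.Hom.f hcond
  dsimp [deltaHom] at this
  exact this

/-- The hom-set bijection exhibiting `Rexp A B` as an exponential. -/
noncomputable def expEquiv (A B C' : Comonad.Coalgebra G) :
    ((tensorLeft A).obj C' ⟶ B) ≃ (C' ⟶ Rexp A B) where
  toFun k := equalizer.lift (Θ A C' B.A (k ≫ unitHom B)) (expEquiv_aux₁ A k)
  invFun φ := fromCofreeHom ((Θ A C' B.A).symm (φ ≫ equalizer.ι _ _)) (expEquiv_aux₂ A φ)
  left_inv k := by
    have h1 : (Θ A C' B.A).symm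
        ((equalizer.lift (Θ A C' B.A (k ≫ unitHom B)) (expEquiv_aux₁ A k))
            ≫ equalizer.ι _ _) = k ≫ unitHom B := by
      rw [equalizer.lift_ι, Equiv.symm_apply_apply]
    ext
    dsimp [fromCofreeHom]
    erw [h1, comp_unitHom_f, Category.assoc, B.counit, Category.comp_id]
  right_inv φ := by
    apply equalizer.hom_ext
    rw [equalizer.lift_ι]
    have h2 : fromCofreeHom ((Θ A C' B.A).symm (φ ≫ equalizer.ι _ _)) (expEquiv_aux₂ A φ)
        ≫ unitHom B = (Θ A C' B.A).symm (φ ≫ equalizer.ι _ _) := by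
      ext
      rw [comp_unitHom_f]
      exact fromCofreeHom_comp_a _ (expEquiv_aux₂ A φ)
    rw [h2, Equiv.apply_symm_apply]
    rfl

lemma expEquiv_natural (A : Comonad.Coalgebra G) {C'' C' B : Comonad.Coalgebra G}
    (g : C'' ⟶ C') (k : (tensorLeft A).obj C' ⟶ B) :
    expEquiv A B C'' ((tensorLeft A).map g ≫ k) = g ≫ expEquiv A B C' k := by
  apply equalizer.hom_ext
  dsimp only [expEquiv, Equiv.coe_fn_mk]
  erw [equalizer.lift_ι]
  conv_rhs => erw [Category.assoc, equalizer.lift_ι]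
  rw [Category.assoc]
  simp only [curriedTensor_obj_map]
  exact Θ_natural g (k ≫ unitHom B)

/-- The category of coalgebras is cartesian closed. -/
noncomputable def coalgebraCartesianClosed : MonoidalClosed (Comonad.Coalgebra G) :=
  MonoidalClosed.mk fun A =>
    Closed.mk
      (Adjunction.rightAdjointOfEquiv (fun C' B => expEquiv A B C')
        (fun C'' C' B g k => expEquiv_natural A g k))
      (Adjunction.adjunctionOfEquivRight _ _)

end Exp2
end CoalgebraToposAux2

namespace CoalgebraToposAux

section Helper

variable {C : Type*} [Category C] [HasTerminal C]

lemma mono_from_terminal {X : C} (f : ⊤_ C ⟶ X) : Mono f :=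
  ⟨fun _ _ _ => terminal.hom_ext _ _⟩

lemma isPullback_aux {S X Z : C} (m : S ⟶ X) [Mono m] (f : X ⟶ Z) (g : ⊤_ C ⟶ Z)
    (comm : terminal.from S ≫ g = m ≫ f)
    (huniv : ∀ {W : C} (q : W ⟶ X), q ≫ f = terminal.from W ≫ g → ∃ l : W ⟶ S, l ≫ m = q) :
    IsPullback (terminal.from S) m g f := by
  refine IsPullback.of_isLimit (PullbackCone.IsLimit.mk comm
    (fun s => (huniv s.snd ?_).choose) (fun s => terminal.hom_ext _ _)
    (fun s => (huniv s.snd ?_).choose_spec) (fun s r h1 h2 => ?_))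
  · rw [s.condition.symm]; congr 1; exact terminal.hom_ext _ _
  · rw [s.condition.symm]; congr 1; exact terminal.hom_ext _ _
  · have := (huniv s.snd
      (by rw [s.condition.symm]; congr 1; exact terminal.hom_ext _ _)).choose_spec
    rw [← cancel_mono m, h2, this]

end Helper

section CopyExp
-- copies of the small lemmas from the Exp section that we need here

variable {E : Type u} [Category.{v} E] {G : Comonad E}

def toCofree' {C' : Comonad.Coalgebra G} {Z : E} (f : C'.A ⟶ Z) : C' ⟶ G.cofree.obj Z where
  f := C'.a ≫ (G : E ⥤ E).map f
  h := by
    show C'.a ≫ (G : E ⥤ E).map (C'.a ≫ (G : E ⥤ E).map f) = (C'.a ≫ (G : E ⥤ E).map f) ≫ G.δ.app Z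
    simp only [Functor.map_comp, ← Category.assoc]
    rw [← Comonad.Coalgebra.coassoc]
    simp [Category.assoc]

@[simp] lemma toCofree'_f {C' : Comonad.Coalgebra G} {Z : E} (f : C'.A ⟶ Z) :
    (toCofree' f).f = C'.a ≫ (G : E ⥤ E).map f := rfl

@[simp] lemma toCofree'_eps {C' : Comonad.Coalgebra G} {Z : E} (f : C'.A ⟶ Z) :
    (toCofree' f).f ≫ G.ε.app Z = f := by
  dsimp
  erw [Category.assoc, G.ε.naturality f]
  simp [← Category.assoc, C'.counit]

lemma toCofree'_eps_self {C' : Comonad.Coalgebra G} {Z : E} (φ : C' ⟶ G.cofree.obj Z) :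
    toCofree' (φ.f ≫ G.ε.app Z) = φ := by
  ext
  dsimp
  erw [Functor.map_comp, ← Category.assoc, φ.h]
  erw [Comonad.cofree_obj_a]
  erw [Category.assoc, Comonad.right_counit, Category.comp_id]

lemma cofreeHom_ext' {C' : Comonad.Coalgebra G} {Z : E} {φ ψ : C' ⟶ G.cofree.obj Z}
    (h : φ.f ≫ G.ε.app Z = ψ.f ≫ G.ε.app Z) : φ = ψ := by
  rw [← toCofree'_eps_self φ, ← toCofree'_eps_self ψ, h]

lemma comp_toCofree'_eps {D C' : Comonad.Coalgebra G} {Z : E} (g : D ⟶ C') (u : C'.A ⟶ Z) :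
    (g ≫ toCofree' u).f ≫ G.ε.app Z = g.f ≫ u := by
  erw [Comonad.Coalgebra.comp_f, Category.assoc, toCofree'_eps]

lemma eps_nat {X Y : E} (g : X ⟶ Y) :
    (G : E ⥤ E).map g ≫ G.ε.app Y = G.ε.app X ≫ g := by
  have := G.ε.naturality g
  dsimp at this
  exact this

lemma delta_nat {X Y : E} (g : X ⟶ Y) :
    (G : E ⥤ E).map g ≫ G.δ.app Y = G.δ.app X ≫ (G : E ⥤ E).map ((G : E ⥤ E).map g) := by
  have := G.δ.naturality g
  dsimp at this
  exact this

end CopyExp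

section Classifier

variable {E : Type u} [Category.{v} E] [HasFiniteLimits E]
variable {G : Comonad E} [PreservesFiniteLimits (G : E ⥤ E)]
variable [HasFiniteLimits (Comonad.Coalgebra G)] [PreservesFiniteLimits (Comonad.forget G)]
variable {Om : E} (t : ⊤_ E ⟶ Om) (γ : (G : E ⥤ E).obj Om ⟶ Om)

/-- `true` of the cofree coalgebra: the image of `t` under `G`, corrected by the
iso `⊤ ≅ G ⊤`. -/
noncomputable def gtrue : ⊤_ E ⟶ (G : E ⥤ E).obj Om :=
  (PreservesTerminal.iso (G : E ⥤ E)).inv ≫ (G : E ⥤ E).map t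

variable (hγ : IsPullback (terminal.from (⊤_ E)) (gtrue t (G := G)) t γ)

include hγ in
lemma gtrue_comp_γ : gtrue t (G := G) ≫ γ = t := by
  have h := hγ.w
  rw [show terminal.from (⊤_ E) = 𝟙 (⊤_ E) from terminal.hom_ext _ _, Category.id_comp] at h
  exact h.symm

include hγ in
lemma factor_gtrue {W : E} (v : W ⟶ (G : E ⥤ E).obj Om) (hv : v ≫ γ = terminal.from W ≫ t) :
    v = terminal.from W ≫ gtrue t := by
  have h2 : hγ.lift (terminal.from W) v hv.symm = terminal.from W := terminal.hom_ext _ _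
  rw [← hγ.lift_snd (terminal.from W) v hv.symm, h2]

include hγ in
lemma gmap_t_γ : (G : E ⥤ E).map t ≫ γ = (PreservesTerminal.iso (G : E ⥤ E)).hom ≫ t := by
  have h := gtrue_comp_γ t γ hγ
  dsimp [gtrue] at h
  conv_rhs => rw [← h]
  simp only [Category.assoc, Iso.hom_inv_id_assoc]

include hγ in
/-- The closure condition: a characteristic map `f` of a subcoalgebra satisfies
`X.a ≫ G f ≫ γ = f`. -/
lemma closed_isPullback {S X : Comonad.Coalgebra G} (m : S ⟶ X) [Mono m.f] {f : X.A ⟶ Om}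
    (hf : IsPullback (terminal.from S.A) m.f t f) :
    IsPullback (terminal.from S.A) m.f t (X.a ≫ (G : E ⥤ E).map f ≫ γ) := by
  apply isPullback_aux
  · -- commutativity
    have hmf : m.f ≫ f = terminal.from S.A ≫ t := hf.w.symm
    have : m.f ≫ X.a ≫ (G : E ⥤ E).map f ≫ γ
        = (S.a ≫ (G : E ⥤ E).map (terminal.from S.A) ≫ (PreservesTerminal.iso (G : E ⥤ E)).hom)
            ≫ t := by
      rw [← Category.assoc m.f, ← m.h]
      dsimp
      rw [Category.assoc, Category.assoc, ← Category.assoc ((G : E ⥤ E).map m.f),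
        ← Functor.map_comp, hmf, Functor.map_comp, Category.assoc, gmap_t_γ t γ hγ]
      simp [Category.assoc]
    rw [this]
    congr 1
    exact terminal.hom_ext _ _
  · intro W q hq
    have h1 : (q ≫ X.a ≫ (G : E ⥤ E).map f) ≫ γ = terminal.from W ≫ t := by
      simpa [Category.assoc] using hq
    have h2 := factor_gtrue t γ hγ _ h1
    have h3 : q ≫ f = terminal.from W ≫ t := by
      have e1 : q ≫ f = q ≫ X.a ≫ (G : E ⥤ E).map f ≫ G.ε.app Om := by
        rw [eps_nat, ← Category.assoc X.a, X.counit, Category.id_comp]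
      rw [e1, show q ≫ X.a ≫ (G : E ⥤ E).map f ≫ G.ε.app Om
          = (q ≫ X.a ≫ (G : E ⥤ E).map f) ≫ G.ε.app Om by simp [Category.assoc], h2]
      dsimp [gtrue]
      rw [Category.assoc, Category.assoc, eps_nat]
      rw [show terminal.from W ≫ (PreservesTerminal.iso (G : E ⥤ E)).inv
            ≫ G.ε.app (⊤_ E) ≫ t
          = (terminal.from W ≫ (PreservesTerminal.iso (G : E ⥤ E)).inv ≫ G.ε.app (⊤_ E)) ≫ t
          by simp [Category.assoc]]
      congr 1
      exact terminal.hom_ext _ _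
    exact ⟨hf.lift (terminal.from W) q h3.symm, hf.lift_snd _ _ _⟩

/-- The subobject classifier of the coalgebra category, as an equalizer. -/
noncomputable def OmegaG : Comonad.Coalgebra G :=
  equalizer (toCofree' γ) (𝟙 (G.cofree.obj Om))

lemma eps_comp_toCofree'_γ {D : Comonad.Coalgebra G} (φ : D ⟶ G.cofree.obj Om) :
    (φ ≫ toCofree' γ).f ≫ G.ε.app Om = φ.f ≫ G.δ.app Om ≫ (G : E ⥤ E).map γ ≫ G.ε.app Om := by
  erw [Comonad.Coalgebra.comp_f, toCofree'_f]
  dsimp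
  simp [Category.assoc]
  erw [Category.assoc, Category.assoc, eps_nat]
  rfl

lemma eps_comp_toCofree'_γ' {D : Comonad.Coalgebra G} (φ : D ⟶ G.cofree.obj Om) :
    (φ ≫ toCofree' γ).f ≫ G.ε.app Om = φ.f ≫ γ := by
  rw [eps_comp_toCofree'_γ, eps_nat]
  rw [show φ.f ≫ G.δ.app Om ≫ G.ε.app ((G : E ⥤ E).obj Om) ≫ γ
      = φ.f ≫ (G.δ.app Om ≫ G.ε.app ((G : E ⥤ E).obj Om)) ≫ γ by exact congrArg (φ.f ≫ ·) (Category.assoc _ _ _).symm]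
  erw [Comonad.left_counit]
  erw [Category.id_comp]

lemma cond_of_closed {X : Comonad.Coalgebra G} {f : X.A ⟶ Om}
    (hcl : X.a ≫ (G : E ⥤ E).map f ≫ γ = f) :
    toCofree' f ≫ toCofree' γ = toCofree' f ≫ 𝟙 (G.cofree.obj Om) := by
  apply cofreeHom_ext'
  erw [eps_comp_toCofree'_γ', Category.comp_id, toCofree'_eps, toCofree'_f, Category.assoc, hcl]

lemma closed_of_cond {X : Comonad.Coalgebra G} (φ : X ⟶ G.cofree.obj Om)
    (h : φ ≫ toCofree' γ = φ) :
    X.a ≫ (G : E ⥤ E).map (φ.f ≫ G.ε.app Om) ≫ γ = φ.f ≫ G.ε.app Om := by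
  have h1 : (φ ≫ toCofree' γ).f ≫ G.ε.app Om = φ.f ≫ G.ε.app Om := by rw [h]
  rw [eps_comp_toCofree'_γ' γ φ] at h1
  have h2 : X.a ≫ (G : E ⥤ E).map (φ.f ≫ G.ε.app Om) = φ.f :=
    congrArg Comonad.Coalgebra.Hom.f (toCofree'_eps_self φ)
  erw [← Category.assoc, h2, h1]

include hγ in
lemma tG_cond :
    toCofree' (terminal.from (⊤_ (Comonad.Coalgebra G)).A ≫ t) ≫ toCofree' γ
      = toCofree' (terminal.from (⊤_ (Comonad.Coalgebra G)).A ≫ t)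
        ≫ 𝟙 (G.cofree.obj Om) := by
  apply cond_of_closed
  rw [Functor.map_comp]
  simp only [Category.assoc]
  rw [gmap_t_γ t γ hγ]
  rw [show (⊤_ (Comonad.Coalgebra G)).a ≫ (G : E ⥤ E).map (terminal.from _)
        ≫ (PreservesTerminal.iso (G : E ⥤ E)).hom ≫ t
      = ((⊤_ (Comonad.Coalgebra G)).a ≫ (G : E ⥤ E).map (terminal.from _)
        ≫ (PreservesTerminal.iso (G : E ⥤ E)).hom) ≫ t by simp [Category.assoc]]
  congr 1
  exact terminal.hom_ext _ _

/-- The truth arrow of the coalgebra classifier. -/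
noncomputable def tG : ⊤_ (Comonad.Coalgebra G) ⟶ OmegaG (G := G) γ :=
  equalizer.lift (toCofree' (terminal.from (⊤_ (Comonad.Coalgebra G)).A ≫ t)) (tG_cond t γ hγ)

end Classifier

section Classifier2

variable {E : Type u} [Category.{v} E] [HasFiniteLimits E]
variable {G : Comonad E} [PreservesFiniteLimits (G : E ⥤ E)]
variable [HasFiniteLimits (Comonad.Coalgebra G)] [PreservesFiniteLimits (Comonad.forget G)]
variable {Om : E} (t : ⊤_ E ⟶ Om) (γ : (G : E ⥤ E).obj Om ⟶ Om)

lemma eps_of_eq {D C₁ C₂ : Comonad.Coalgebra G} {Z : E} {g₁ : D ⟶ C₁} {g₂ : D ⟶ C₂}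
    {u₁ : C₁.A ⟶ Z} {u₂ : C₂.A ⟶ Z}
    (h : g₁ ≫ toCofree' u₁ = g₂ ≫ toCofree' u₂) : g₁.f ≫ u₁ = g₂.f ≫ u₂ := by
  have h1 := congrArg (fun z => Comonad.Coalgebra.Hom.f z ≫ G.ε.app Z) h
  dsimp only [Comonad.Coalgebra.comp_f] at h1
  rw [← comp_toCofree'_eps g₁ u₁, ← comp_toCofree'_eps g₂ u₂, h]

variable (hγ : IsPullback (terminal.from (⊤_ E)) (gtrue t (G := G)) t γ)

include hγ in
theorem coalgebra_subobjectClassifier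
    (hcl : ∀ {S X : E} (m : S ⟶ X), Mono m →
      ∃! φ : X ⟶ Om, IsPullback (terminal.from S) m t φ) :
    _root_.HasSubobjectClassifier (Comonad.Coalgebra G) := by
  refine ⟨OmegaG γ, tG t γ hγ, ?_⟩
  intro S X m hm
  haveI := hm
  haveI hmf : Mono m.f := inferInstanceAs (Mono ((Comonad.forget G).map m))
  obtain ⟨f, hf, huniq⟩ := hcl m.f hmf
  have hclosed : X.a ≫ (G : E ⥤ E).map f ≫ γ = f :=
    huniq _ (closed_isPullback t γ hγ m hf)
  set t0 : (⊤_ (Comonad.Coalgebra G)).A ⟶ Om := terminal.from (⊤_ (Comonad.Coalgebra G)).A ≫ t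
    with ht0
  have htG : tG t γ hγ ≫ equalizer.ι (toCofree' γ) (𝟙 (G.cofree.obj Om)) = toCofree' t0 :=
    equalizer.lift_ι _ _
  refine ⟨equalizer.lift (toCofree' f) (cond_of_closed γ hclosed), ?_, ?_⟩
  · -- existence: the square is a pullback in coalgebras
    apply isPullback_aux
    · -- commutativity
      erw [← cancel_mono (equalizer.ι (toCofree' γ) (𝟙 (G.cofree.obj Om)))]
      erw [Category.assoc, Category.assoc, htG, equalizer.lift_ι]
      apply cofreeHom_ext'
      rw [comp_toCofree'_eps, comp_toCofree'_eps, ← hf.w, ht0, ← Category.assoc]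
      congr 1
      exact terminal.hom_ext _ _
    · -- universal property
      intro W q hq
      have h1 : q ≫ toCofree' f = terminal.from W ≫ toCofree' t0 := by
        erw [← equalizer.lift_ι (toCofree' f) (cond_of_closed γ hclosed), ← htG,
          ← Category.assoc, ← Category.assoc, hq]
        rfl
      have h2 : q.f ≫ f = terminal.from W.A ≫ t := by
        rw [eps_of_eq h1, ht0, ← Category.assoc]
        congr 1
        exact terminal.hom_ext _ _
      have hl0 := hf.lift_snd (terminal.from W.A) q.f h2.symm
      set l0 := hf.lift (terminal.from W.A) q.f h2.symm with hl0def
      haveI : Mono ((G : E ⥤ E).map m.f) :=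
        inferInstanceAs (Mono ((G : E ⥤ E).map m.f))
      have hhom : W.a ≫ (G : E ⥤ E).map l0 = l0 ≫ S.a := by
        rw [← cancel_mono ((G : E ⥤ E).map m.f)]
        simp only [Category.assoc]
        rw [← Functor.map_comp, hl0, q.h, m.h, ← Category.assoc, hl0]
      refine ⟨{ f := l0, h := hhom }, ?_⟩
      ext
      exact hl0
  · -- uniqueness
    intro φ' hφ'
    set ι := equalizer.ι (toCofree' γ) (𝟙 (G.cofree.obj Om)) with hι
    set f' : X.A ⟶ Om := (φ' ≫ ι).f ≫ G.ε.app Om with hf'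
    have hψ : φ' ≫ ι = toCofree' f' := (toCofree'_eps_self _).symm
    have hcl' : X.a ≫ (G : E ⥤ E).map f' ≫ γ = f' := by
      apply closed_of_cond γ (φ' ≫ ι)
      erw [Category.assoc, equalizer.condition, Category.comp_id]
    -- f' classifies m.f in E
    have hcomm : m.f ≫ f' = terminal.from S.A ≫ t := by
      have h3 : m ≫ (φ' ≫ ι) = terminal.from S ≫ toCofree' t0 := by
        erw [← htG, ← Category.assoc, ← Category.assoc, ← hφ'.w]
      rw [hψ] at h3
      rw [eps_of_eq h3, ht0, ← Category.assoc]
      congr 1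
      exact terminal.hom_ext _ _
    have hpb' : IsPullback (terminal.from S.A) m.f t f' := by
      apply isPullback_aux _ _ _ hcomm.symm
      intro W q hq
      -- build the coalgebra structure on the pullback of t and f'
      haveI : Mono t := mono_from_terminal t
      set P := pullback t f' with hP
      set n : P ⟶ X.A := pullback.snd t f' with hn
      haveI : Mono n := inferInstance
      have hnf' : n ≫ f' = terminal.from P ≫ t := by
        rw [← pullback.condition]
        congr 1
        exact terminal.hom_ext _ _
      have hclP : (n ≫ X.a ≫ (G : E ⥤ E).map f') ≫ γ = terminal.from P ≫ t := by
        rw [Category.assoc, Category.assoc, hcl', hnf']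
      have h2 := factor_gtrue t γ hγ _ hclP
      have hPpb : IsPullback (pullback.fst t f') n t f' := IsPullback.of_hasPullback t f'
      have hGP := hPpb.map (G : E ⥤ E)
      have hw : (terminal.from P ≫ (PreservesTerminal.iso (G : E ⥤ E)).inv)
          ≫ (G : E ⥤ E).map t = (n ≫ X.a) ≫ (G : E ⥤ E).map f' := by
        have h2' := h2
        rw [← Category.assoc] at h2'
        rw [h2']
        dsimp [gtrue]
        simp [Category.assoc]
      set r : P ⟶ (G : E ⥤ E).obj P :=
        hGP.lift (terminal.from P ≫ (PreservesTerminal.iso (G : E ⥤ E)).inv) (n ≫ X.a) hw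
        with hr
      have hrn : r ≫ (G : E ⥤ E).map n = n ≫ X.a := hGP.lift_snd _ _ _
      have hcounit : r ≫ G.ε.app P = 𝟙 P := by
        rw [← cancel_mono n, Category.assoc, ← eps_nat n, ← Category.assoc, hrn,
          Category.assoc, X.counit, Category.comp_id, Category.id_comp]
      haveI : Mono ((G : E ⥤ E).map ((G : E ⥤ E).map n)) :=
        inferInstanceAs (Mono ((G : E ⥤ E).map ((G : E ⥤ E).map n)))
      have hcoassoc : r ≫ G.δ.app P = r ≫ (G : E ⥤ E).map r := by
        rw [← cancel_mono ((G : E ⥤ E).map ((G : E ⥤ E).map n))]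
        simp only [Category.assoc]
        rw [← delta_nat n, ← Category.assoc r ((G : E ⥤ E).map n) (G.δ.app X.A), hrn,
          Category.assoc n X.a (G.δ.app X.A), X.coassoc,
          ← Functor.map_comp, hrn, Functor.map_comp,
          ← Category.assoc r ((G : E ⥤ E).map n) ((G : E ⥤ E).map X.a), hrn,
          Category.assoc]
      set Phat : Comonad.Coalgebra G :=
        { A := P, a := r, counit := hcounit, coassoc := hcoassoc } with hPhat
      set nhat : Phat ⟶ X := { f := n, h := hrn } with hnhat
      have hcomm2 : terminal.from Phat ≫ tG t γ hγ = nhat ≫ φ' := by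
        erw [← cancel_mono ι, Category.assoc, Category.assoc, htG, hψ]
        apply cofreeHom_ext'
        rw [comp_toCofree'_eps, comp_toCofree'_eps]
        show (terminal.from Phat).f ≫ t0 = n ≫ f'
        rw [hnf', ht0, ← Category.assoc]
        congr 1
        exact terminal.hom_ext _ _
      have hlhat := hφ'.lift_snd (terminal.from Phat) nhat hcomm2
      set lhat := hφ'.lift (terminal.from Phat) nhat hcomm2 with hlhatdef
      have hz : terminal.from W ≫ t = q ≫ f' := hq.symm
      refine ⟨pullback.lift (terminal.from W) q hz ≫ lhat.f, ?_⟩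
      have : lhat.f ≫ m.f = n := congrArg Comonad.Coalgebra.Hom.f hlhat
      rw [Category.assoc, this, hn]
      exact pullback.lift_snd _ _ _
    have : f' = f := huniq f' hpb'
    erw [← cancel_mono ι, equalizer.lift_ι, hψ, this]

end Classifier2

end CoalgebraToposAux


theorem isElementaryTopos_comonad_coalgebra
    {E : Type u} [Category.{v} E] (hE : IsElementaryTopos E)
    (G : Comonad E) (hG : PreservesFiniteLimits (G : E ⥤ E)) :
    IsElementaryTopos (Comonad.Coalgebra G) := by
  letI := hE.hasFiniteLimits
  letI : CartesianMonoidalCategory E := CartesianMonoidalCategory.ofHasFiniteProducts (C := E)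
  haveI := hG
  letI : MonoidalClosed E := hE.cartesianClosed.some
  haveI hFL : HasFiniteLimits (Comonad.Coalgebra G) :=
    CoalgebraToposAux.hasFiniteLimits_coalgebra G
  haveI : PreservesFiniteLimits (Comonad.forget G) :=
    CoalgebraToposAux.preservesFiniteLimits_forget G
  refine ⟨hFL, ⟨?_⟩, ?_⟩
  · letI : CartesianMonoidalCategory (Comonad.Coalgebra G) :=
      CartesianMonoidalCategory.ofHasFiniteProducts (C := Comonad.Coalgebra G)
    exact CoalgebraToposAux2.coalgebraCartesianClosed
  · obtain ⟨Om, t, hcl⟩ := hE.subobjectClassifier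
    haveI : Mono t := CoalgebraToposAux.mono_from_terminal t
    haveI hmg : Mono (CoalgebraToposAux.gtrue t (G := G)) := by
      unfold CoalgebraToposAux.gtrue
      infer_instance
    obtain ⟨γ, hγ, -⟩ := hcl (CoalgebraToposAux.gtrue t (G := G)) hmg
    exact CoalgebraToposAux.coalgebra_subobjectClassifier t γ hγ hcl
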